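/- Let A, B be coprime integers with B > 0 and let q be a positive integer. Then the number of p in {0,1,...,q-1} with gcd(Bp+A, q) = 1 equals φ(q) · ∏_{p prime, p | gcd(q,B)} (1 + 1/(p-1)), where φ is Euler's totient function. -/

import Mathlib

open Finset


lemma isUnit_intCast_iff {n : ℕ} (x : ℤ) : IsUnit ((x : ℤ) : ZMod n) ↔ Int.gcd x n = 1 := by
  have h : ((x : ZMod n)) = (x.natAbs : ZMod n) ∨ ((x : ZMod n)) = -(x.natAbs : ZMod n) := by
    rcases Int.natAbs_eq x with h | h
    · left; conv_lhs => rw [h]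
      simp only [Int.cast_natCast]
    · right; conv_lhs => rw [h]
      simp only [Int.cast_neg, Int.cast_natCast]
  have hg : Int.gcd x n = Nat.gcd x.natAbs n := by
    simp [Int.gcd]
  rcases h with h | h <;>
    rw [h] <;> simp [ZMod.isUnit_iff_coprime, Nat.Coprime, hg, -Nat.cast_natAbs]

lemma card_filter_range_mul {P : ℕ → Prop} [DecidablePred P] {n : ℕ}
    (hp : Function.Periodic P n) (k : ℕ) :
    #((range (k * n)).filter P) = k * #((range n).filter P) := by
  induction k with
  | zero => simp
  | succ k ih =>
    have hr : range ((k + 1) * n) = range (k * n) ∪ Ico (k * n) (k * n + n) := by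
      rw [range_eq_Ico, range_eq_Ico, Finset.Ico_union_Ico_eq_Ico (Nat.zero_le _)
        (Nat.le_add_right _ _)]
      congr 1
      ring
    rw [hr, filter_union, card_union_of_disjoint, ih,
      Nat.filter_Ico_card_eq_of_periodic _ _ _ hp, Nat.count_eq_card_filter_range]
    · ring
    · exact (Finset.disjoint_filter_filter
        (by rw [range_eq_Ico]; exact Finset.Ico_disjoint_Ico_consecutive 0 (k*n) (k*n+n)))


lemma primeFactors_prod_pow {s : Finset ℕ} {e : ℕ → ℕ}
    (hs : ∀ p ∈ s, p.Prime) (he : ∀ p ∈ s, e p ≠ 0) :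
    (∏ p ∈ s, p ^ e p).primeFactors = s := by
  have hne : (∏ p ∈ s, p ^ e p) ≠ 0 :=
    Finset.prod_ne_zero_iff.2 fun p hp => pow_ne_zero _ (hs p hp).pos.ne'
  ext r
  simp only [Nat.mem_primeFactors, hne, ne_eq, not_false_eq_true, and_true]
  constructor
  · rintro ⟨hr, hdvd⟩
    obtain ⟨p, hp, hpd⟩ := hr.prime.exists_mem_finset_dvd hdvd
    have := (Nat.prime_dvd_prime_iff_eq hr (hs p hp)).1 ((hr.dvd_of_dvd_pow hpd))
    rwa [this]
  · intro hr
    exact ⟨hs r hr, dvd_trans (dvd_pow_self r (he r hr)) (Finset.dvd_prod_of_mem _ hr)⟩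


lemma card_affine_coprime (n : ℕ) (hn : 0 < n) (A B : ℤ) (hB : Int.gcd B n = 1) :
    #((range n).filter fun p : ℕ => Int.gcd (B * p + A) n = 1) = n.totient := by
  haveI : NeZero n := ⟨hn.ne'⟩
  have hBu : IsUnit ((B : ZMod n)) := (isUnit_intCast_iff B).2 hB
  obtain ⟨u, hu⟩ := hBu
  -- step 1: rewrite condition
  have hcond : ∀ p : ℕ, (Int.gcd (B * p + A) n = 1) ↔ IsUnit ((B : ZMod n) * p + A) := by
    intro p
    rw [← isUnit_intCast_iff]
    push_cast
    rfl
  rw [filter_congr (fun p _ => by rw [hcond p])]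
  -- step 2: biject to ZMod n
  have h2 : #((range n).filter fun p : ℕ => IsUnit ((B : ZMod n) * p + A))
      = #(Finset.univ.filter fun x : ZMod n => IsUnit ((B : ZMod n) * x + A)) := by
    apply Finset.card_bij (fun p _ => ((p : ℕ) : ZMod n))
    · intro p hp
      simp only [mem_filter, mem_range] at hp ⊢
      exact ⟨mem_univ _, hp.2⟩
    · intro p hp p' hp' h
      simp only [mem_filter, mem_range] at hp hp'
      have := congrArg ZMod.val h
      rwa [ZMod.val_cast_of_lt hp.1, ZMod.val_cast_of_lt hp'.1] at this
    · intro x hx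
      simp only [mem_filter, mem_univ, true_and] at hx
      refine ⟨x.val, ?_, ?_⟩
      · simp only [mem_filter, mem_range]
        refine ⟨ZMod.val_lt x, ?_⟩
        rwa [ZMod.natCast_val, ZMod.cast_id]
      · rw [ZMod.natCast_val, ZMod.cast_id]
  rw [h2]
  -- step 3: biject affine map
  have h3 : #(Finset.univ.filter fun x : ZMod n => IsUnit ((B : ZMod n) * x + A))
      = #(Finset.univ.filter fun y : ZMod n => IsUnit y) := by
    apply Finset.card_bij (fun x _ => (B : ZMod n) * x + A)
    · intro x hx
      simp only [mem_filter, mem_univ, true_and] at hx ⊢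
      exact hx
    · intro x _ x' _ h
      have : (↑u⁻¹ : ZMod n) * ((B : ZMod n) * x + A - A) = (↑u⁻¹ : ZMod n) * ((B : ZMod n) * x' + A - A) := by rw [h]
      rw [add_sub_cancel_right, add_sub_cancel_right, ← hu, u.inv_mul_cancel_left,
        u.inv_mul_cancel_left] at this
      exact this
    · intro y hy
      simp only [mem_filter, mem_univ, true_and] at hy
      refine ⟨(↑u⁻¹ : ZMod n) * (y - A), mem_filter.2 ⟨mem_univ _, ?_⟩, ?_⟩
      all_goals
        rw [show (B : ZMod n) * ((↑u⁻¹ : ZMod n) * (y - A)) + A = y by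
          rw [← hu, ← mul_assoc, u.mul_inv, one_mul, sub_add_cancel]]
      exact hy
  rw [h3]
  -- step 4: card of units
  rw [← ZMod.card_units_eq_totient n]
  rw [Fintype.card]
  symm
  apply Finset.card_bij (fun (u : (ZMod n)ˣ) _ => (u : ZMod n))
  · intro u _
    exact mem_filter.2 ⟨mem_univ _, u.isUnit⟩
  · intro u _ v _ h
    exact Units.ext h
  · intro y hy
    obtain ⟨u, hu⟩ := (mem_filter.1 hy).2
    exact ⟨u, mem_univ _, hu⟩

/-- For coprime integers `A, B` with `B > 0` and a positive integer `q`, the number of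
`p ∈ {0, …, q-1}` with `gcd(Bp+A, q) = 1` equals
`φ(q) · ∏_{p prime, p ∣ gcd(q,B)} (1 + 1/(p-1))`. -/

theorem card_coprime_shifted_residues_totient (A B : ℤ) (hAB : IsCoprime A B) (hB : 0 < B)
    (q : ℕ) (hq : 0 < q) :
    (((Finset.range q).filter
        (fun p : ℕ => Int.gcd (B * (p : ℤ) + A) (q : ℤ) = 1)).card : ℝ)
      = (Nat.totient q : ℝ) * ∏ p ∈ (Nat.gcd q B.natAbs).primeFactors,
          (1 + 1 / ((p : ℝ) - 1)) := by
  have hB0 : B.natAbs ≠ 0 := by positivity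
  set Pq := q.primeFactors with hPq
  set PB := B.natAbs.primeFactors with hPB
  set e := fun p => q.factorization p with he'
  set q1 := ∏ p ∈ Pq ∩ PB, p ^ e p with hq1
  set q2 := ∏ p ∈ Pq \ PB, p ^ e p with hq2
  have hprime : ∀ p ∈ Pq, p.Prime := fun p hp => Nat.prime_of_mem_primeFactors hp
  have hepos : ∀ p ∈ Pq, e p ≠ 0 := fun p hp => by
    simpa [he', ← Nat.support_factorization, Finsupp.mem_support_iff] using
      (by rwa [Nat.support_factorization] : p ∈ q.factorization.support)
  have hqfact : q1 * q2 = q := by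
    rw [hq1, hq2, Finset.sdiff_eq_filter, ← Finset.filter_mem_eq_inter,
      Finset.prod_filter_mul_prod_filter_not]
    conv_rhs => rw [← Nat.factorization_prod_pow_eq_self hq.ne']
    rw [Finsupp.prod, Nat.support_factorization]
  have hq2pos : 0 < q2 := Finset.prod_pos fun p hp =>
    pow_pos (hprime p (Finset.mem_sdiff.1 hp).1).pos _
  have hq1pos : 0 < q1 := Finset.prod_pos fun p hp =>
    pow_pos (hprime p (Finset.mem_inter.1 hp).1).pos _
  have hq2pf : q2.primeFactors = Pq \ PB :=
    primeFactors_prod_pow (fun p hp => hprime p (Finset.mem_sdiff.1 hp).1)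
      (fun p hp => hepos p (Finset.mem_sdiff.1 hp).1)
  have hq2B : Nat.Coprime q2 B.natAbs := by
    apply Nat.Coprime.prod_left
    intro p hp
    have hpp := hprime p (Finset.mem_sdiff.1 hp).1
    have hnd : ¬ p ∣ B.natAbs := fun hd =>
      (Finset.mem_sdiff.1 hp).2 (Nat.mem_primeFactors.2 ⟨hpp, hd, hB0⟩)
    exact Nat.Coprime.pow_left _ ((Nat.Prime.coprime_iff_not_dvd hpp).2 hnd)
  have hq2Bint : Int.gcd B q2 = 1 := by
    have : Int.gcd B q2 = Nat.gcd B.natAbs q2 := by simp [Int.gcd]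
    rw [this]; exact hq2B.symm
  -- condition equivalence
  have hcond : ∀ p : ℕ, Int.gcd (B * p + A) (q : ℤ) = 1 ↔ Int.gcd (B * p + A) (q2 : ℤ) = 1 := by
    intro p
    set x : ℤ := B * p + A with hx
    have hgq : Int.gcd x q = Nat.gcd x.natAbs q := by simp [Int.gcd]
    have hgq2 : Int.gcd x q2 = Nat.gcd x.natAbs q2 := by simp [Int.gcd]
    rw [hgq, hgq2]
    constructor
    · intro h
      exact Nat.Coprime.coprime_dvd_right ⟨q1, by rw [← hqfact]; ring⟩ h
    · intro h
      by_contra hne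
      obtain ⟨r, hrp, hrd⟩ := Nat.exists_prime_and_dvd hne
      have hrx : r ∣ x.natAbs := hrd.trans (Nat.gcd_dvd_left _ _)
      have hrq : r ∣ q := hrd.trans (Nat.gcd_dvd_right _ _)
      by_cases hrB : r ∣ B.natAbs
      · have h1 : (r : ℤ) ∣ B := Int.dvd_natAbs.1 (Int.natCast_dvd_natCast.2 hrB)
        have h2 : (r : ℤ) ∣ x := Int.dvd_natAbs.1 (Int.natCast_dvd_natCast.2 hrx)
        have hA : (r : ℤ) ∣ A := by
          have hAx : A = x - B * p := by rw [hx]; ring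
          rw [hAx]
          exact dvd_sub h2 (h1.mul_right _)
        obtain ⟨u, v, huv⟩ := hAB
        have hone : (r : ℤ) ∣ 1 := huv ▸ dvd_add (hA.mul_left u) (h1.mul_left v)
        have : r ∣ 1 := by exact_mod_cast hone
        exact hrp.ne_one (Nat.dvd_one.1 this)
      · have hrmem : r ∈ Pq \ PB := Finset.mem_sdiff.2
          ⟨Nat.mem_primeFactors.2 ⟨hrp, hrq, hq.ne'⟩,
           fun hmem => hrB (Nat.dvd_of_mem_primeFactors hmem)⟩
        have hrq2 : r ∣ q2 :=
          dvd_trans (dvd_pow_self r (hepos r (Finset.mem_sdiff.1 hrmem).1))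
            (Finset.dvd_prod_of_mem _ hrmem)
        have : r ∣ 1 := h ▸ Nat.dvd_gcd hrx hrq2
        exact hrp.ne_one (Nat.dvd_one.1 this)
  -- periodicity
  have hper : Function.Periodic (fun p : ℕ => Int.gcd (B * p + A) (q2 : ℤ) = 1) q2 := by
    intro p
    have hcast : B * ((p + q2 : ℕ) : ℤ) + A = (B * p + A) + (q2 : ℤ) * B := by push_cast; ring
    simp only [hcast]
    rw [eq_iff_iff, ← Int.isCoprime_iff_gcd_eq_one, ← Int.isCoprime_iff_gcd_eq_one]
    constructor
    · intro h
      have h2 : IsCoprime ((B * p + A) + (q2 : ℤ) * B + (q2 : ℤ) * (-B)) (q2 : ℤ) :=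
        h.add_mul_left_left (-B)
      simpa using h2
    · intro h
      exact h.add_mul_left_left B
  -- counting
  have hcount : #((Finset.range q).filter
      (fun p : ℕ => Int.gcd (B * (p : ℤ) + A) (q : ℤ) = 1)) = q1 * q2.totient := by
    rw [Finset.filter_congr (fun p _ => by rw [hcond p])]
    rw [← hqfact, card_filter_range_mul hper q1, card_affine_coprime q2 hq2pos A B hq2Bint]
  rw [hcount]
  -- real totient formula
  have totR : ∀ n : ℕ, (Nat.totient n : ℝ) = n * ∏ p ∈ n.primeFactors, (1 - (p : ℝ)⁻¹) := by
    intro n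
    have h := congrArg (Rat.cast : ℚ → ℝ) (Nat.totient_eq_mul_prod_factors n)
    push_cast at h
    exact h
  have hsplit : ∏ p ∈ Pq, (1 - (p : ℝ)⁻¹)
      = (∏ p ∈ Pq ∩ PB, (1 - (p : ℝ)⁻¹)) * ∏ p ∈ Pq \ PB, (1 - (p : ℝ)⁻¹) := by
    rw [Finset.sdiff_eq_filter, ← Finset.filter_mem_eq_inter,
      Finset.prod_filter_mul_prod_filter_not]
  have hone : (∏ p ∈ Pq ∩ PB, (1 - (p : ℝ)⁻¹)) * ∏ p ∈ Pq ∩ PB, (1 + 1 / ((p : ℝ) - 1)) = 1 := by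
    rw [← Finset.prod_mul_distrib]
    apply Finset.prod_eq_one
    intro p hp
    have hpp := hprime p (Finset.mem_inter.1 hp).1
    have h2 : (2 : ℝ) ≤ p := by exact_mod_cast hpp.two_le
    have hp0 : (p : ℝ) ≠ 0 := by linarith
    have hp1 : (p : ℝ) - 1 ≠ 0 := by intro h; rw [sub_eq_zero] at h; linarith [h]
    field_simp
    ring
  have hqcast : (q : ℝ) = (q1 : ℝ) * q2 := by exact_mod_cast hqfact.symm
  rw [Nat.primeFactors_gcd hq.ne' hB0, ← hPq, ← hPB]
  push_cast
  rw [totR q, totR q2, hq2pf, hsplit, hqcast]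
  linear_combination (-(q1 : ℝ) * q2 * ∏ p ∈ Pq \ PB, (1 - (p : ℝ)⁻¹)) * hone
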